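/- Let m ≥ 0 and n ≥ 1 be integers and let q be a real polynomial with deg q < n. Then ∫_0^1 x^m · P_{m,n}(x) · q(x) dx = 0. -/

import Mathlib

open Polynomial MeasureTheory intervalIntegral

private lemma poly_intble (p : Polynomial ℝ) :
    IntervalIntegrable (fun x => p.eval x) volume 0 1 :=
  (p.continuous).intervalIntegrable _ _

private lemma poly_ibp (p q : Polynomial ℝ) :
    ∫ x in (0:ℝ)..1, (derivative p).eval x * q.eval x
      = p.eval 1 * q.eval 1 - p.eval 0 * q.eval 0
        - ∫ x in (0:ℝ)..1, p.eval x * (derivative q).eval x := by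
  have h := integral_deriv_mul_eq_sub (u := fun x => p.eval x) (v := fun x => q.eval x)
    (u' := fun x => (derivative p).eval x) (v' := fun x => (derivative q).eval x)
    (fun x _ => p.hasDerivAt x) (fun x _ => q.hasDerivAt x)
    (poly_intble _) (poly_intble _)
  have h2 : (∫ x in (0:ℝ)..1, (derivative p).eval x * q.eval x)
      + ∫ x in (0:ℝ)..1, p.eval x * (derivative q).eval x
      = p.eval 1 * q.eval 1 - p.eval 0 * q.eval 0 := by
    rw [← integral_add (f := fun x => (derivative p).eval x * q.eval x)
      (g := fun x => p.eval x * (derivative q).eval x) (((derivative p).continuous.mul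
      q.continuous).intervalIntegrable _ _)
      ((p.continuous.mul (derivative q).continuous).intervalIntegrable _ _)]
    exact h
  linarith [h2]

private lemma key (n : ℕ) : ∀ f q : Polynomial ℝ,
    (∀ k < n, (derivative^[k] f).eval (0:ℝ) = 0 ∧ (derivative^[k] f).eval (1:ℝ) = 0) →
    derivative^[n] q = 0 →
    ∫ x in (0:ℝ)..1, (derivative^[n] f).eval x * q.eval x = 0 := by
  induction n with
  | zero => intro f q _ hq; simp at hq; simp [hq]
  | succ n ih =>
    intro f q hf hq
    have : derivative^[n+1] f = derivative (derivative^[n] f) := by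
      rw [Function.iterate_succ_apply']
    rw [this, poly_ibp]
    have h0 := (hf n (Nat.lt_succ_self n)).1
    have h1 := (hf n (Nat.lt_succ_self n)).2
    rw [h0, h1]
    have := ih f (derivative q) (fun k hk => hf k (hk.trans (Nat.lt_succ_self n)))
      (by rw [← Function.iterate_succ_apply]; exact hq)
    rw [this]
    ring

/-- `P m n` is orthogonal, with respect to the weight `x^m` on `[0,1]`, to every
polynomial `q` of degree less than `n`. -/
theorem stmt_6 (P : ℕ → ℕ → Polynomial ℝ)
    (hP0 : ∀ m, P m 0 = 1)
    (hP : ∀ m n, 1 ≤ n →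
      (X : Polynomial ℝ) ^ m * P m n
        = C (1 / (n.factorial : ℝ)) *
            derivative^[n] (X ^ (m + n) * (X - 1) ^ n))
    (m n : ℕ) (hn : 1 ≤ n) (q : Polynomial ℝ) (hq : q.degree < n) :
    ∫ x in (0:ℝ)..1, x ^ m * ((P m n).eval x * q.eval x) = 0 := by
  set f : Polynomial ℝ := X ^ (m + n) * (X - 1) ^ n with hf
  have hroot : ∀ k < n, (derivative^[k] f).eval (0:ℝ) = 0
      ∧ (derivative^[k] f).eval (1:ℝ) = 0 := by
    intro k hk
    constructor
    · have hd : (X : Polynomial ℝ) ^ (m + n - k) ∣ derivative^[k] f :=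
        pow_sub_dvd_iterate_derivative_of_pow_dvd k (Dvd.intro _ rfl)
      obtain ⟨g, hg⟩ := hd
      rw [hg]
      have : m + n - k ≠ 0 := by omega
      simp [eval_pow, zero_pow this]
    · have hd : ((X : Polynomial ℝ) - 1) ^ (n - k) ∣ derivative^[k] f :=
        pow_sub_dvd_iterate_derivative_of_pow_dvd k ⟨X ^ (m + n), mul_comm _ _⟩
      obtain ⟨g, hg⟩ := hd
      rw [hg]
      have : n - k ≠ 0 := by omega
      simp [eval_pow, zero_pow this]
  have hqd : derivative^[n] q = 0 := by
    apply Polynomial.iterate_derivative_eq_zero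
    rcases eq_or_ne q 0 with h | h
    · simp [h]; omega
    · exact (Polynomial.natDegree_lt_iff_degree_lt h).2 hq
  have hkey := key n f q hroot hqd
  have heq : ∀ x : ℝ, x ^ m * ((P m n).eval x * q.eval x)
      = (1 / (n.factorial : ℝ)) * ((derivative^[n] f).eval x * q.eval x) := by
    intro x
    have := congrArg (fun p => Polynomial.eval x p) (hP m n hn)
    simp only [eval_mul, eval_pow, eval_X, eval_C] at this
    rw [← mul_assoc, this]
    ring
  simp_rw [heq]
  rw [intervalIntegral.integral_const_mul, hkey, mul_zero]
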